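/- Let κ, μ be real with μ > κ − 1/2, let ε ≥ 0, and suppose either ε > 0 or μ < 1/2. Then the kernel Ξ(s,t) = e^{−εs − st} (s + 1/2)^{(κ+μ−1/2)/2} (s − 1/2)^{(μ−κ−1/2)/2} is square integrable on (1/2,∞) × (0,∞): ∫_{1/2}^∞ ∫_0^∞ |Ξ(s,t)|² dt ds = ∫_{1/2}^∞ e^{−2εs} (s + 1/2)^{κ+μ−1/2} (s − 1/2)^{μ−κ−1/2} (2s)^{−1} ds < ∞. -/

import Mathlib

open MeasureTheory Set

lemma rpow_bound2 {x y : ℝ} (c : ℝ) (hy : 0 < y) (h1 : y / 2 ≤ x) (h2 : x ≤ 2 * y) :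
    x ^ c ≤ 2 ^ |c| * y ^ c := by
  have hx : 0 < x := lt_of_lt_of_le (by linarith) h1
  rcases le_or_gt 0 c with hc | hc
  · rw [abs_of_nonneg hc]
    calc x ^ c ≤ (2 * y) ^ c := Real.rpow_le_rpow hx.le h2 hc
      _ = 2 ^ c * y ^ c := Real.mul_rpow (by norm_num) hy.le
  · rw [abs_of_neg hc]
    calc x ^ c ≤ (y / 2) ^ c := Real.rpow_le_rpow_of_nonpos (by linarith) h1 hc.le
      _ = 2 ^ (-c) * y ^ c := by
          rw [div_eq_mul_inv, Real.mul_rpow hy.le (by norm_num), Real.rpow_neg (by norm_num),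
            ← Real.inv_rpow (by norm_num)]
          ring

lemma int_exp_Ioi {r : ℝ} (hr : 0 < r) :
    ∫ t in Ioi (0 : ℝ), Real.exp (-(r * t)) = 1 / r := by
  have := Real.integral_rpow_mul_exp_neg_mul_Ioi one_pos hr
  simpa only [sub_self, Real.rpow_zero, one_mul, Real.Gamma_one, Real.rpow_one, mul_one]
    using this

lemma int_aux (ε q : ℝ) (hε : 0 ≤ ε) (hcase : 0 < ε ∨ q < -1) :
    IntegrableOn (fun s : ℝ => Real.exp (-2 * ε * s) * s ^ q) (Ioi (1 : ℝ)) := by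
  have hm : AEStronglyMeasurable (fun s : ℝ => Real.exp (-2 * ε * s) * s ^ q)
      (volume.restrict (Ioi (1 : ℝ))) :=
    (by fun_prop : Measurable fun s : ℝ => Real.exp (-2 * ε * s) * s ^ q).aestronglyMeasurable
  rcases hcase with hε' | hq
  · have base : IntegrableOn (fun x : ℝ => x ^ |q| * Real.exp (-(2 * ε) * x ^ (1 : ℝ)))
        (Ioi (0 : ℝ)) :=
      integrableOn_rpow_mul_exp_neg_mul_rpow (by linarith [abs_nonneg q]) one_pos (by linarith)
    refine Integrable.mono' (base.mono_set (Ioi_subset_Ioi zero_le_one)) hm ?_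
    filter_upwards [ae_restrict_mem measurableSet_Ioi] with s hs
    have hs1 : (1 : ℝ) < s := hs
    have hs0 : (0 : ℝ) < s := by linarith
    rw [Real.norm_eq_abs, abs_of_nonneg (by positivity), Real.rpow_one,
      show -(2 * ε) * s = -2 * ε * s by ring, mul_comm]
    exact mul_le_mul_of_nonneg_right
      (Real.rpow_le_rpow_of_exponent_le hs1.le (le_abs_self q)) (Real.exp_pos _).le
  · refine Integrable.mono' (integrableOn_Ioi_rpow_of_lt hq one_pos) hm ?_
    filter_upwards [ae_restrict_mem measurableSet_Ioi] with s hs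
    have hs1 : (1 : ℝ) < s := hs
    have hs0 : (0 : ℝ) < s := by linarith
    rw [Real.norm_eq_abs, abs_of_nonneg (by positivity)]
    exact mul_le_of_le_one_left (by positivity) (Real.exp_le_one_iff.mpr (by nlinarith))

/-- The kernel `Ξ(s,t) = e^{-εs - st} (s+1/2)^{(κ+μ-1/2)/2} (s-1/2)^{(μ-κ-1/2)/2}` is
square integrable on `(1/2,∞) × (0,∞)`, with
`∫∫ Ξ² dt ds = ∫ e^{-2εs} (s+1/2)^{κ+μ-1/2} (s-1/2)^{μ-κ-1/2} (2s)⁻¹ ds < ∞`. -/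
theorem stmt_17 (κ μ : ℝ) (h : μ > κ - 1/2) (ε : ℝ) (hε : 0 ≤ ε)
    (hcase : 0 < ε ∨ μ < 1/2)
    (Ξ : ℝ → ℝ → ℝ)
    (hΞ : ∀ s t : ℝ, Ξ s t =
      Real.exp (-ε * s - s * t) * (s + 1/2) ^ ((κ + μ - 1/2) / 2) *
        (s - 1/2) ^ ((μ - κ - 1/2) / 2)) :
    (∀ s ∈ Ioi (1/2 : ℝ),
      (∫ t in Ioi (0:ℝ), (Ξ s t) ^ 2) =
        Real.exp (-2 * ε * s) * (s + 1/2) ^ (κ + μ - 1/2) * (s - 1/2) ^ (μ - κ - 1/2) /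
          (2 * s)) ∧
    IntegrableOn (fun s =>
        Real.exp (-2 * ε * s) * (s + 1/2) ^ (κ + μ - 1/2) * (s - 1/2) ^ (μ - κ - 1/2) /
          (2 * s)) (Ioi (1/2 : ℝ)) ∧
    Integrable (fun p : ℝ × ℝ => (Ξ p.1 p.2) ^ 2)
      ((volume.restrict (Ioi (1/2 : ℝ))).prod (volume.restrict (Ioi (0:ℝ)))) := by
  set a : ℝ := κ + μ - 1/2 with ha
  set b : ℝ := μ - κ - 1/2 with hb
  -- pointwise rewriting of the square of the kernel
  have key : ∀ s : ℝ, 1/2 < s → ∀ t : ℝ, Ξ s t ^ 2 =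
      (Real.exp (-2 * ε * s) * (s + 1/2) ^ a * (s - 1/2) ^ b) * Real.exp (-(2 * s * t)) := by
    intro s hs t
    have hsp : (0 : ℝ) < s + 1/2 := by linarith
    have hsm : (0 : ℝ) < s - 1/2 := by linarith
    rw [hΞ]
    have e1 : Real.exp (-ε * s - s * t) * Real.exp (-ε * s - s * t)
        = Real.exp (-2 * ε * s) * Real.exp (-(2 * s * t)) := by
      rw [← Real.exp_add, ← Real.exp_add]; ring_nf
    have e2 : (s + 1/2) ^ (a / 2) * (s + 1/2) ^ (a / 2) = (s + 1/2) ^ a := by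
      rw [← Real.rpow_add hsp]; ring_nf
    have e3 : (s - 1/2) ^ (b / 2) * (s - 1/2) ^ (b / 2) = (s - 1/2) ^ b := by
      rw [← Real.rpow_add hsm]; ring_nf
    calc (Real.exp (-ε * s - s * t) * (s + 1/2) ^ (a / 2) * (s - 1/2) ^ (b / 2)) ^ 2
        = (Real.exp (-ε * s - s * t) * Real.exp (-ε * s - s * t)) *
            ((s + 1/2) ^ (a / 2) * (s + 1/2) ^ (a / 2)) *
            ((s - 1/2) ^ (b / 2) * (s - 1/2) ^ (b / 2)) := by ring
      _ = (Real.exp (-2 * ε * s) * (s + 1/2) ^ a * (s - 1/2) ^ b) * Real.exp (-(2 * s * t)) := by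
          rw [e1, e2, e3]; ring
  -- Part 1
  have part1 : ∀ s ∈ Ioi (1/2 : ℝ),
      (∫ t in Ioi (0:ℝ), (Ξ s t) ^ 2) =
        Real.exp (-2 * ε * s) * (s + 1/2) ^ a * (s - 1/2) ^ b / (2 * s) := by
    intro s hs
    have hs' : 1/2 < s := hs
    have hs0 : (0 : ℝ) < 2 * s := by linarith
    calc (∫ t in Ioi (0:ℝ), (Ξ s t) ^ 2)
        = ∫ t in Ioi (0:ℝ), (Real.exp (-2 * ε * s) * (s + 1/2) ^ a * (s - 1/2) ^ b) *
            Real.exp (-(2 * s * t)) := by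
          exact setIntegral_congr_fun measurableSet_Ioi fun t _ => key s hs' t
      _ = (Real.exp (-2 * ε * s) * (s + 1/2) ^ a * (s - 1/2) ^ b) *
            ∫ t in Ioi (0:ℝ), Real.exp (-(2 * s * t)) := by
          exact integral_const_mul _ _
      _ = Real.exp (-2 * ε * s) * (s + 1/2) ^ a * (s - 1/2) ^ b / (2 * s) := by
          rw [int_exp_Ioi hs0]; ring
  -- Part 2
  have meas_g : Measurable fun s : ℝ =>
      Real.exp (-2 * ε * s) * (s + 1/2) ^ a * (s - 1/2) ^ b / (2 * s) := by fun_prop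
  have part2 : IntegrableOn (fun s =>
      Real.exp (-2 * ε * s) * (s + 1/2) ^ a * (s - 1/2) ^ b / (2 * s)) (Ioi (1/2 : ℝ)) := by
    rw [show Ioi (1/2 : ℝ) = Ioc (1/2 : ℝ) 1 ∪ Ioi 1 from
      (Ioc_union_Ioi_eq_Ioi (by norm_num)).symm]
    refine IntegrableOn.union ?_ ?_
    · -- near 1/2
      have hbase : IntegrableOn (fun s : ℝ => (s - 1/2) ^ b) (Ioc (1/2 : ℝ) 1) := by
        have h0 : IntervalIntegrable (fun x : ℝ => x ^ b) volume 0 (1/2) :=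
          intervalIntegral.intervalIntegrable_rpow' (by rw [hb]; linarith)
        have h2 : IntervalIntegrable (fun x : ℝ => (x - 1/2) ^ b) volume (1/2) 1 := by
          have h1 := h0.comp_sub_right (1/2)
          norm_num at h1 ⊢
          exact h1
        rw [intervalIntegrable_iff_integrableOn_Ioc_of_le (by norm_num)] at h2
        exact h2
      refine Integrable.mono' (hbase.const_mul (2 ^ |a|)) meas_g.aestronglyMeasurable ?_
      filter_upwards [ae_restrict_mem measurableSet_Ioc] with s hs
      obtain ⟨hs1, hs2⟩ := hs
      have hsp : (0 : ℝ) < s + 1/2 := by linarith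
      have hsm : (0 : ℝ) < s - 1/2 := by linarith
      rw [Real.norm_eq_abs, abs_of_nonneg (by positivity)]
      have hA : (s + 1/2) ^ a ≤ 2 ^ |a| * (1 : ℝ) ^ a :=
        rpow_bound2 a one_pos (by linarith) (by linarith)
      rw [Real.one_rpow, mul_one] at hA
      have hE : Real.exp (-2 * ε * s) ≤ 1 := Real.exp_le_one_iff.mpr (by nlinarith)
      calc Real.exp (-2 * ε * s) * (s + 1/2) ^ a * (s - 1/2) ^ b / (2 * s)
          ≤ 1 * (2 ^ |a|) * (s - 1/2) ^ b / 1 := by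
            gcongr <;> first
              | positivity
              | linarith
              | exact Real.rpow_nonneg hsm.le _
              | exact hE
              | exact hA
        _ = 2 ^ |a| * (s - 1/2) ^ b := by ring
    · -- at infinity
      have hq : 0 < ε ∨ a + b - 1 < -1 := by
        rcases hcase with h1 | h1
        · exact Or.inl h1
        · right; rw [ha, hb]; linarith
      have hbase := (int_aux ε (a + b - 1) hε hq).const_mul (2 ^ |a| * 2 ^ |b| * 2⁻¹)
      refine Integrable.mono' hbase meas_g.aestronglyMeasurable ?_
      filter_upwards [ae_restrict_mem measurableSet_Ioi] with s hs
      have hs1 : (1 : ℝ) < s := hs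
      have hs0 : (0 : ℝ) < s := by linarith
      have hsp : (0 : ℝ) < s + 1/2 := by linarith
      have hsm : (0 : ℝ) < s - 1/2 := by linarith
      rw [Real.norm_eq_abs, abs_of_nonneg (by positivity)]
      have hA : (s + 1/2) ^ a ≤ 2 ^ |a| * s ^ a :=
        rpow_bound2 a hs0 (by linarith) (by linarith)
      have hB : (s - 1/2) ^ b ≤ 2 ^ |b| * s ^ b :=
        rpow_bound2 b hs0 (by linarith) (by linarith)
      have hsplit : s ^ (a + b - 1) = s ^ a * s ^ b / s := by
        rw [Real.rpow_sub hs0, Real.rpow_add hs0, Real.rpow_one]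
      calc Real.exp (-2 * ε * s) * (s + 1/2) ^ a * (s - 1/2) ^ b / (2 * s)
          ≤ Real.exp (-2 * ε * s) * (2 ^ |a| * s ^ a) * (2 ^ |b| * s ^ b) / (2 * s) := by
            gcongr <;> positivity
        _ = 2 ^ |a| * 2 ^ |b| * 2⁻¹ *
              (Real.exp (-2 * ε * s) * (s ^ a * s ^ b / s)) := by
            field_simp
        _ = 2 ^ |a| * 2 ^ |b| * 2⁻¹ * (Real.exp (-2 * ε * s) * s ^ (a + b - 1)) := by
            rw [hsplit]
  refine ⟨part1, part2, ?_⟩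
  -- Part 3
  have measΞ : AEStronglyMeasurable (fun p : ℝ × ℝ => (Ξ p.1 p.2) ^ 2)
      ((volume.restrict (Ioi (1/2 : ℝ))).prod (volume.restrict (Ioi (0:ℝ)))) := by
    have : (fun p : ℝ × ℝ => (Ξ p.1 p.2) ^ 2) = fun p : ℝ × ℝ =>
        (Real.exp (-ε * p.1 - p.1 * p.2) * (p.1 + 1/2) ^ (a / 2) *
          (p.1 - 1/2) ^ (b / 2)) ^ 2 := by
      funext p; rw [hΞ]
    rw [this]
    exact (by fun_prop : Measurable fun p : ℝ × ℝ =>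
      (Real.exp (-ε * p.1 - p.1 * p.2) * (p.1 + 1/2) ^ (a / 2) *
        (p.1 - 1/2) ^ (b / 2)) ^ 2).aestronglyMeasurable
  rw [MeasureTheory.integrable_prod_iff measΞ]
  constructor
  · filter_upwards [ae_restrict_mem measurableSet_Ioi] with s hs
    have hs' : (1/2 : ℝ) < s := hs
    have : (fun t => Ξ s t ^ 2) = fun t =>
        (Real.exp (-2 * ε * s) * (s + 1/2) ^ a * (s - 1/2) ^ b) * Real.exp (-(2 * s) * t) := by
      funext t
      rw [key s hs' t]
      congr 2
      ring
    rw [this]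
    exact (exp_neg_integrableOn_Ioi 0 (by linarith)).const_mul _
  · refine part2.congr ?_
    filter_upwards [ae_restrict_mem measurableSet_Ioi] with s hs
    have hs' : (1/2 : ℝ) < s := hs
    calc Real.exp (-2 * ε * s) * (s + 1/2) ^ a * (s - 1/2) ^ b / (2 * s)
        = ∫ t in Ioi (0:ℝ), Ξ s t ^ 2 := (part1 s hs).symm
      _ = ∫ t in Ioi (0:ℝ), ‖Ξ s t ^ 2‖ := by
          refine setIntegral_congr_fun measurableSet_Ioi fun t _ => ?_
          rw [Real.norm_eq_abs, abs_of_nonneg (sq_nonneg _)]
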